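/- Let B denote the set of bounded real sequences, regarded as a topological vector space with the subspace topology inherited from the product space ℝ^ℕ (the topology of pointwise convergence), and let m ∈ ℕ, m ≥ 1. Then B is a σ-Peano space, and CS_∞(ℝ^m, B) is 𝔠-lineable in C(ℝ^m, B): there exists a linearly independent family of cardinality 𝔠 (the continuum) in the real vector space C(ℝ^m, B) such that every nonzero finite linear combination of its members belongs to CS_∞(ℝ^m, B). -/

import Mathlib

/-- The space of bounded real sequences, as a submodule of `ℝ^ℕ`.  As a topological
space it carries the subspace topology inherited from the product topology on
`ℕ → ℝ` (the topology of pointwise convergence), not the sup-norm topology. -/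
def boundedSeq : Submodule ℝ (ℕ → ℝ) where
  carrier := {x | ∃ C : ℝ, ∀ n, |x n| ≤ C}
  add_mem' := by
    rintro x y ⟨C, hC⟩ ⟨D, hD⟩
    exact ⟨C + D, fun n => (abs_add_le _ _).trans (add_le_add (hC n) (hD n))⟩
  zero_mem' := ⟨0, fun n => by simp⟩
  smul_mem' := by
    rintro c x ⟨C, hC⟩
    refine ⟨|c| * C, fun n => ?_⟩
    rw [Pi.smul_apply, smul_eq_mul, abs_mul]
    exact mul_le_mul_of_nonneg_left (hC n) (abs_nonneg c)

/-- A Peano space: a nonempty compact, connected, locally connected, metrizable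
topological space. -/
def IsPeanoSpace (X : Type*) [TopologicalSpace X] : Prop :=
  Nonempty X ∧ CompactSpace X ∧ ConnectedSpace X ∧ LocallyConnectedSpace X ∧
    TopologicalSpace.MetrizableSpace X

/-- A σ-Peano space: an increasing sequence of subsets, each a Peano space with the
subspace topology, whose union is the whole space. -/
def IsSigmaPeano (X : Type*) [TopologicalSpace X] : Prop :=
  ∃ K : ℕ → Set X, Monotone K ∧ (∀ n, IsPeanoSpace (K n)) ∧ (⋃ n, K n) = Set.univ

/-- `CSInf m X f` means `f : ℝ^m → X` is continuous and each fiber `f⁻¹({a})` is an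
unbounded subset of `ℝ^m`; in particular such an `f` is surjective. -/
def CSInf (m : ℕ) (X : Type*) [TopologicalSpace X]
    (f : EuclideanSpace ℝ (Fin m) → X) : Prop :=
  Continuous f ∧ ∀ a : X, ¬ Bornology.IsBounded (f ⁻¹' {a})

open Real in
noncomputable def pfun (t : ℝ) : ℝ := min 1 (max 0 (3 * (1 - Real.cos (Real.pi * t)) / 2 - 1))

lemma pfun_continuous : Continuous pfun := by
  unfold pfun; fun_prop

lemma pfun_mem (t : ℝ) : pfun t ∈ Set.Icc (0:ℝ) 1 := by
  unfold pfun
  constructor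
  · exact le_min one_pos.le (le_max_left _ _) |>.trans (le_refl _) |> fun h => h
  · exact min_le_left _ _

lemma pfun_periodic (N : ℤ) (s : ℝ) : pfun (2 * N + s) = pfun s := by
  unfold pfun
  rw [show Real.pi * (2 * N + s) = Real.pi * s + N * (2 * Real.pi) by ring,
    Real.cos_add_int_mul_two_pi]

lemma pfun_eq_zero {s : ℝ} (h0 : 0 ≤ s) (h1 : s ≤ 1/3) : pfun s = 0 := by
  have hc : Real.cos (Real.pi / 3) ≤ Real.cos (Real.pi * s) := by
    apply Real.cos_le_cos_of_nonneg_of_le_pi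
    · positivity
    · linarith [Real.pi_pos]
    · nlinarith [Real.pi_pos]
  rw [Real.cos_pi_div_three] at hc
  unfold pfun
  have : 3 * (1 - Real.cos (Real.pi * s)) / 2 - 1 ≤ 0 := by linarith
  rw [max_eq_left this, min_eq_right zero_le_one]

lemma pfun_eq_one {s : ℝ} (h0 : 2/3 ≤ s) (h1 : s ≤ 1) : pfun s = 1 := by
  have hc : Real.cos (Real.pi * s) ≤ Real.cos (Real.pi * (2/3)) := by
    apply Real.cos_le_cos_of_nonneg_of_le_pi
    · positivity
    · nlinarith [Real.pi_pos]
    · nlinarith [Real.pi_pos]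
  have h23 : Real.cos (Real.pi * (2/3)) = -(1/2) := by
    rw [show Real.pi * (2/3) = Real.pi - Real.pi/3 by ring, Real.cos_pi_sub,
      Real.cos_pi_div_three]
  rw [h23] at hc
  unfold pfun
  have h2 : (1:ℝ) ≤ 3 * (1 - Real.cos (Real.pi * s)) / 2 - 1 := by linarith
  rw [max_eq_right (by linarith), min_eq_left h2]

/-- greedy residual sequence -/
noncomputable def bres (y : ℝ) : ℕ → ℝ
  | 0 => y
  | (i+1) => if 1/2^(i+1) ≤ bres y i then bres y i - 1/2^(i+1) else bres y i

noncomputable def bdig (y : ℝ) (i : ℕ) : Bool := decide (1/2^(i+1) ≤ bres y i)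

lemma bres_mem {y : ℝ} (h0 : 0 ≤ y) (h1 : y ≤ 1) (i : ℕ) :
    bres y i ∈ Set.Icc (0:ℝ) (1/2^i) := by
  induction i with
  | zero => simpa using ⟨h0, h1⟩
  | succ i ih =>
    obtain ⟨ha, hb⟩ := ih
    rw [show bres y (i+1) = if 1/2^(i+1) ≤ bres y i then bres y i - 1/2^(i+1) else bres y i
      from rfl]
    split_ifs with h
    · constructor
      · linarith
      · have : (1:ℝ)/2^(i+1) = (1/2^i)/2 := by ring
        rw [this] at h ⊢
        linarith
    · push_neg at h
      exact ⟨ha, by linarith [h.le]⟩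

lemma bdig_hasSum {y : ℝ} (h0 : 0 ≤ y) (h1 : y ≤ 1) :
    HasSum (fun i => (if bdig y i then (1:ℝ) else 0) / 2^(i+1)) y := by
  set f : ℕ → ℝ := fun i => (if bdig y i then (1:ℝ) else 0) / 2^(i+1) with hf
  have hstep : ∀ i, f i = bres y i - bres y (i+1) := by
    intro i
    rw [hf]
    simp only
    rw [show bres y (i+1) = if 1/2^(i+1) ≤ bres y i then bres y i - 1/2^(i+1) else bres y i
      from rfl, bdig]
    by_cases h : 1/2^(i+1) ≤ bres y i <;> rw [one_div] at h <;> simp [h, one_div]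
  have hpartial : ∀ n, ∑ i ∈ Finset.range n, f i = y - bres y n := by
    intro n
    calc ∑ i ∈ Finset.range n, f i = ∑ i ∈ Finset.range n, (bres y i - bres y (i+1)) := by
          simp [hstep]
      _ = bres y 0 - bres y n := Finset.sum_range_sub' (bres y) n
      _ = y - bres y n := rfl
  have hnn : ∀ i, 0 ≤ f i := by
    intro i; rw [hf]; simp only; positivity
  rw [hasSum_iff_tendsto_nat_of_nonneg hnn]
  have htend : Filter.Tendsto (fun n => bres y n) Filter.atTop (nhds 0) := by
    apply squeeze_zero (fun n => (bres_mem h0 h1 n).1) (fun n => (bres_mem h0 h1 n).2)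
    have := tendsto_pow_atTop_nhds_zero_of_lt_one (by norm_num : (0:ℝ) ≤ 1/2)
      (by norm_num : (1:ℝ)/2 < 1)
    simpa [one_div, inv_pow] using this
  have : Filter.Tendsto (fun n => ∑ i ∈ Finset.range n, f i) Filter.atTop (nhds (y - 0)) := by
    simp only [hpartial]
    exact Filter.Tendsto.const_sub y htend
  simpa using this


lemma summable_half : Summable (fun k : ℕ => (1:ℝ) / 2 ^ (k+1)) := by
  have := summable_geometric_two.mul_left (1/2 : ℝ)
  apply this.congr
  intro k; rw [pow_succ]; simp only [one_div, inv_pow]; ring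

lemma tsum_half : ∑' k : ℕ, (1:ℝ) / 2 ^ (k+1) = 1 := by
  have h : ∀ k : ℕ, (1:ℝ) / 2 ^ (k+1) = (1/2) * (1/2)^k := by
    intro k; rw [pow_succ]; simp only [one_div, inv_pow]; ring
  rw [tsum_congr h, tsum_mul_left, tsum_geometric_of_lt_one (by norm_num) (by norm_num)]
  norm_num

noncomputable def gam (n : ℕ) (t : ℝ) : ℝ := ∑' k, pfun (3 ^ (Nat.pair n k) * t) / 2 ^ (k+1)

lemma gam_term_le (n k : ℕ) (t : ℝ) :
    pfun (3 ^ (Nat.pair n k) * t) / 2 ^ (k+1) ≤ 1 / 2 ^ (k+1) := by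
  have := (pfun_mem (3 ^ (Nat.pair n k) * t)).2
  gcongr

lemma gam_term_nonneg (n k : ℕ) (t : ℝ) :
    0 ≤ pfun (3 ^ (Nat.pair n k) * t) / 2 ^ (k+1) := by
  have := (pfun_mem (3 ^ (Nat.pair n k) * t)).1
  positivity

lemma summable_gam (n : ℕ) (t : ℝ) :
    Summable (fun k => pfun (3 ^ (Nat.pair n k) * t) / 2 ^ (k+1)) :=
  Summable.of_nonneg_of_le (gam_term_nonneg n · t) (gam_term_le n · t) summable_half

lemma gam_mem (n : ℕ) (t : ℝ) : gam n t ∈ Set.Icc (0:ℝ) 1 := by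
  constructor
  · exact tsum_nonneg (gam_term_nonneg n · t)
  · rw [← tsum_half]
    exact Summable.tsum_le_tsum (gam_term_le n · t) (summable_gam n t) summable_half

lemma gam_continuous (n : ℕ) : Continuous (gam n) := by
  apply continuous_tsum (u := fun k => (1:ℝ)/2^(k+1)) (fun k => ((pfun_continuous.comp (continuous_const.mul continuous_id)).div_const _)) summable_half
  intro k t
  simp only [Function.comp, id_eq, Pi.mul_apply]
  rw [Real.norm_eq_abs, abs_of_nonneg (gam_term_nonneg n k t)]
  exact gam_term_le n k t


noncomputable def cter (C : ℕ → Bool) (j : ℕ) : ℝ := 2 * (if C j then 1 else 0) / 3 ^ (j+1)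

lemma cter_nonneg (C : ℕ → Bool) (j : ℕ) : 0 ≤ cter C j := by
  unfold cter; split_ifs <;> positivity

lemma cter_le (C : ℕ → Bool) (j : ℕ) : cter C j ≤ 2 / 3 ^ (j+1) := by
  unfold cter; split_ifs
  · norm_num
  · simp
    positivity

lemma summable_third : Summable (fun j : ℕ => (2:ℝ) / 3 ^ (j+1)) := by
  have h : Summable (fun j : ℕ => ((2:ℝ)/3) * (1/3)^j) :=
    (summable_geometric_of_lt_one (by norm_num) (by norm_num)).mul_left _
  apply h.congr
  intro j; rw [pow_succ]; simp only [one_div, inv_pow]; ring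

lemma tsum_third : ∑' j : ℕ, (2:ℝ) / 3 ^ (j+1) = 1 := by
  have h : ∀ j : ℕ, (2:ℝ) / 3 ^ (j+1) = (2/3) * (1/3)^j := by
    intro j; rw [pow_succ]; simp only [one_div, inv_pow]; ring
  rw [tsum_congr h, tsum_mul_left, tsum_geometric_of_lt_one (by norm_num) (by norm_num)]
  norm_num

lemma summable_cter (C : ℕ → Bool) : Summable (cter C) :=
  Summable.of_nonneg_of_le (cter_nonneg C) (cter_le C) summable_third

noncomputable def cval (C : ℕ → Bool) : ℝ := ∑' j, cter C j

lemma cval_mem (C : ℕ → Bool) : cval C ∈ Set.Icc (0:ℝ) 1 := by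
  constructor
  · exact tsum_nonneg (cter_nonneg C)
  · rw [← tsum_third]
    exact Summable.tsum_le_tsum (cter_le C) (summable_cter C) summable_third

lemma tsum_tail_third : ∑' i : ℕ, (2:ℝ) / 3 ^ (i+2) = 1/3 := by
  have h : ∀ i : ℕ, (2:ℝ) / 3 ^ (i+2) = (2/9) * (1/3)^i := by
    intro i; rw [pow_add]; norm_num; simp only [one_div, inv_pow]; ring
  rw [tsum_congr h, tsum_mul_left, tsum_geometric_of_lt_one (by norm_num) (by norm_num)]
  norm_num

lemma pfun_cval (C : ℕ → Bool) (j : ℕ) :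
    pfun (3 ^ j * cval C) = if C j then 1 else 0 := by
  have hsum := summable_cter C
  have hg : Summable (fun i => 3 ^ j * cter C i) := hsum.mul_left _
  have hmul : 3 ^ j * cval C = ∑' i, 3 ^ j * cter C i := by
    rw [cval, tsum_mul_left]
  -- tail
  set tail : ℝ := ∑' i : ℕ, 3 ^ j * cter C (i + (j+1)) with htail
  have htails : Summable (fun i => 3 ^ j * cter C (i + (j+1))) :=
    ((summable_nat_add_iff (j+1)).2 hsum).mul_left _
  have tail_nonneg : 0 ≤ tail :=
    tsum_nonneg fun i => mul_nonneg (by positivity) (cter_nonneg C _)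
  have tail_le : tail ≤ 1/3 := by
    rw [htail, ← tsum_tail_third]
    apply Summable.tsum_le_tsum ?_ htails
      (by have h : Summable (fun i : ℕ => (2:ℝ)/3^(i+2)) := by
            have h2 : ∀ i : ℕ, (2:ℝ) / 3 ^ (i+2) = (2/9) * (1/3)^i := by
              intro i; rw [pow_add]; norm_num; simp only [one_div, inv_pow]; ring
            rw [funext h2]
            exact (summable_geometric_of_lt_one (by norm_num) (by norm_num)).mul_left _
          exact h)
    intro i
    have := cter_le C (i + (j+1))
    have h3 : (3:ℝ) ^ j * (2 / 3 ^ (i + (j+1) + 1)) = 2 / 3 ^ (i+2) := by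
      rw [show i + (j+1) + 1 = (i+2) + j by ring, pow_add]
      field_simp
    calc 3 ^ j * cter C (i + (j+1)) ≤ (3:ℝ) ^ j * (2 / 3 ^ (i + (j+1) + 1)) := by
          apply mul_le_mul_of_nonneg_left this (by positivity)
      _ = 2 / 3 ^ (i+2) := h3
  -- split
  have hsplit : (∑ i ∈ Finset.range (j+1), 3 ^ j * cter C i) + tail
      = ∑' i, 3 ^ j * cter C i := Summable.sum_add_tsum_nat_add (j+1) hg
  -- head
  set N : ℕ := ∑ i ∈ Finset.range j, (if C i then 1 else 0) * 3^(j-i-1) with hN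
  have hhead : ∑ i ∈ Finset.range j, 3 ^ j * cter C i = 2 * (N:ℝ) := by
    rw [hN]
    push_cast
    rw [Finset.mul_sum]
    apply Finset.sum_congr rfl
    intro i hi
    have hij : i < j := Finset.mem_range.1 hi
    have hpw : (3:ℝ) ^ j = 3 ^ (j-i-1) * 3^(i+1) := by
      rw [← pow_add]
      congr 1
      omega
    rw [cter, hpw]
    have h31 : (3:ℝ)^(i+1) ≠ 0 := by positivity
    field_simp
  have hgj : 3 ^ j * cter C j = 2 * (if C j then (1:ℝ) else 0) / 3 := by
    rw [cter, show j + 1 = j + 1 from rfl, pow_succ]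
    have : (3:ℝ)^j ≠ 0 := by positivity
    field_simp
  have key : (3:ℝ) ^ j * cval C = 2 * (N:ℤ) + (2 * (if C j then (1:ℝ) else 0) / 3 + tail) := by
    rw [hmul, ← hsplit, Finset.sum_range_succ, hhead, hgj]
    push_cast
    ring
  rw [key, pfun_periodic]
  rcases Bool.eq_false_or_eq_true (C j) with hC | hC <;> rw [hC] <;>
    simp only [Bool.false_eq_true, if_false, if_true]
  · exact pfun_eq_one (by linarith) (by linarith)
  · exact pfun_eq_zero (by linarith) (by linarith)


lemma gam_cover {y : ℕ → ℝ} (hy : ∀ n, y n ∈ Set.Icc (0:ℝ) 1) :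
    ∃ t ∈ Set.Icc (0:ℝ) 1, ∀ n, gam n t = y n := by
  set C : ℕ → Bool := fun j => bdig (y (Nat.unpair j).1) (Nat.unpair j).2 with hC
  refine ⟨cval C, cval_mem C, fun n => ?_⟩
  have h1 : ∀ k : ℕ, pfun (3 ^ (Nat.pair n k) * cval C) / 2 ^ (k+1)
      = (if bdig (y n) k then (1:ℝ) else 0) / 2 ^ (k+1) := by
    intro k
    rw [pfun_cval C (Nat.pair n k), hC]
    simp [Nat.unpair_pair]
  rw [gam, tsum_congr h1]
  exact (bdig_hasSum (hy n).1 (hy n).2).tsum_eq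


noncomputable def wfun (k : ℕ) (t : ℝ) : ℝ := max 0 (min 1 (min (t - 4*k) (4*k+3 - t)))

lemma wfun_continuous (k : ℕ) : Continuous (wfun k) := by unfold wfun; fun_prop

lemma wfun_nonneg (k : ℕ) (t : ℝ) : 0 ≤ wfun k t := le_max_left _ _

lemma wfun_le_one (k : ℕ) (t : ℝ) : wfun k t ≤ 1 :=
  max_le zero_le_one (min_le_left _ _)

lemma wfun_eq_zero_left {k : ℕ} {t : ℝ} (h : t ≤ 4*k) : wfun k t = 0 := by
  unfold wfun
  apply max_eq_left
  calc min 1 (min (t - 4*k) (4*k+3 - t)) ≤ min (t - 4*k) (4*k+3 - t) := min_le_right _ _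
    _ ≤ t - 4*k := min_le_left _ _
    _ ≤ 0 := by linarith

lemma wfun_eq_zero_right {k : ℕ} {t : ℝ} (h : 4*k+3 ≤ t) : wfun k t = 0 := by
  unfold wfun
  apply max_eq_left
  calc min 1 (min (t - 4*k) (4*k+3 - t)) ≤ min (t - 4*k) (4*k+3 - t) := min_le_right _ _
    _ ≤ 4*k+3 - t := min_le_right _ _
    _ ≤ 0 := by linarith

lemma wfun_eq_one {k : ℕ} {t : ℝ} (h1 : 4*k+1 ≤ t) (h2 : t ≤ 4*k+2) : wfun k t = 1 := by
  unfold wfun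
  rw [min_eq_left (le_min (by linarith) (by linarith)), max_eq_right zero_le_one]

lemma wfun_other {k j : ℕ} {t : ℝ} (h1 : 4*k+1 ≤ t) (h2 : t ≤ 4*k+2) (hj : j ≠ k) :
    wfun j t = 0 := by
  rcases lt_or_gt_of_ne hj with h | h
  · have : (j:ℝ) + 1 ≤ k := by exact_mod_cast h
    exact wfun_eq_zero_right (by linarith)
  · have : (k:ℝ) + 1 ≤ j := by exact_mod_cast h
    exact wfun_eq_zero_left (by linarith)

/-- enumeration of pairs (rational, nat) with every value attained for arbitrarily large k -/
noncomputable def qnEquiv : ℚ × ℕ ≃ ℕ := (Denumerable.eqv (ℚ × ℕ))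

noncomputable def dec (j : ℕ) : ℚ × ℕ := qnEquiv.symm (Nat.unpair j).1

lemma dec_infinite (p : ℚ × ℕ) (K : ℕ) : ∃ k, K ≤ k ∧ dec k = p := by
  refine ⟨Nat.pair (qnEquiv p) K, Nat.right_le_pair _ _, ?_⟩
  rw [dec, Nat.unpair_pair, Equiv.symm_apply_apply]

noncomputable def qseq (k : ℕ) : ℝ := ((dec k).1 : ℝ)
noncomputable def nseq (k : ℕ) : ℝ := ((dec k).2 : ℝ)

lemma nseq_nonneg (k : ℕ) : 0 ≤ nseq k := Nat.cast_nonneg _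

noncomputable def rho (t : ℝ) : ℝ := ∑' k, wfun k t * qseq k
noncomputable def fseq (n : ℕ) (t : ℝ) : ℝ :=
  ∑' k, wfun k t * (nseq k * (2 * gam n (t - (4*k+1)) - 1))

lemma blocksum_vanish {g : ℕ → ℝ → ℝ} (hz : ∀ (k : ℕ) (t : ℝ), t ≤ 4*(k:ℝ) → g k t = 0)
    {K : ℕ} {t : ℝ} (ht : t < 4*(K:ℝ)) : ∀ k ∉ Finset.range K, g k t = 0 := by
  intro k hk
  apply hz
  have hKk : K ≤ k := le_of_not_gt (fun hlt => hk (Finset.mem_range.mpr hlt))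
  have : (K:ℝ) ≤ k := by exact_mod_cast hKk
  linarith

lemma blocksum_eq_sum {g : ℕ → ℝ → ℝ} (hz : ∀ (k : ℕ) (t : ℝ), t ≤ 4*(k:ℝ) → g k t = 0)
    {K : ℕ} {t : ℝ} (ht : t < 4*(K:ℝ)) : ∑' k, g k t = ∑ k ∈ Finset.range K, g k t :=
  tsum_eq_sum (blocksum_vanish hz ht)

lemma continuous_blocksum {g : ℕ → ℝ → ℝ} (hc : ∀ k, Continuous (g k))
    (hz : ∀ (k : ℕ) (t : ℝ), t ≤ 4*(k:ℝ) → g k t = 0) : Continuous (fun t => ∑' k, g k t) := by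
  rw [continuous_iff_continuousAt]
  intro t₀
  obtain ⟨K, hK⟩ := exists_nat_gt (t₀ + 1)
  have hK4 : t₀ + 1 < 4*(K:ℝ) := by
    have h0 : (0:ℝ) ≤ K := Nat.cast_nonneg K
    linarith
  have hopen : IsOpen {t : ℝ | t < 4*(K:ℝ)} := isOpen_lt continuous_id continuous_const
  have hmem : t₀ ∈ {t : ℝ | t < 4*(K:ℝ)} := by
    simp only [Set.mem_setOf_eq]; linarith
  have hcs : ContinuousAt (fun t => ∑ k ∈ Finset.range K, g k t) t₀ :=
    (continuous_finset_sum _ (fun k _ => hc k)).continuousAt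
  apply hcs.congr
  apply Filter.eventuallyEq_of_mem (hopen.mem_nhds hmem)
  intro t ht
  exact (blocksum_eq_sum hz ht).symm

lemma hz_rho : ∀ (k : ℕ) (t : ℝ), t ≤ 4*(k:ℝ) → wfun k t * qseq k = 0 := by
  intro k t ht; rw [wfun_eq_zero_left ht, zero_mul]

lemma hz_fseq (n : ℕ) : ∀ (k : ℕ) (t : ℝ), t ≤ 4*(k:ℝ) →
    wfun k t * (nseq k * (2 * gam n (t - (4*k+1)) - 1)) = 0 := by
  intro k t ht; rw [wfun_eq_zero_left ht, zero_mul]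

lemma rho_continuous : Continuous rho :=
  continuous_blocksum (fun k => (wfun_continuous k).mul continuous_const) hz_rho

lemma fseq_continuous (n : ℕ) : Continuous (fseq n) := by
  apply continuous_blocksum (fun k => ?_) (hz_fseq n)
  exact (wfun_continuous k).mul (continuous_const.mul
    (((continuous_const.mul ((gam_continuous n).comp
      (continuous_id.sub continuous_const))).sub continuous_const)))

lemma rho_block {k : ℕ} {t : ℝ} (h1 : 4*(k:ℝ)+1 ≤ t) (h2 : t ≤ 4*(k:ℝ)+2) :
    rho t = qseq k := by
  rw [rho, tsum_eq_single k (fun j hj => by rw [wfun_other h1 h2 hj, zero_mul]),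
    wfun_eq_one h1 h2, one_mul]

lemma fseq_block {k n : ℕ} {t : ℝ} (h1 : 4*(k:ℝ)+1 ≤ t) (h2 : t ≤ 4*(k:ℝ)+2) :
    fseq n t = nseq k * (2 * gam n (t - (4*k+1)) - 1) := by
  rw [fseq, tsum_eq_single k (fun j hj => by rw [wfun_other h1 h2 hj, zero_mul]),
    wfun_eq_one h1 h2, one_mul]

lemma abs_two_gam_sub_one_le (n : ℕ) (t : ℝ) : |2 * gam n t - 1| ≤ 1 := by
  obtain ⟨h0, h1⟩ := gam_mem n t
  rw [abs_le]; constructor <;> linarith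

lemma fseq_bound (t : ℝ) : ∃ C : ℝ, ∀ n, |fseq n t| ≤ C := by
  obtain ⟨K, hK⟩ := exists_nat_gt (t/4)
  have ht : t < 4*(K:ℝ) := by linarith
  refine ⟨∑ k ∈ Finset.range K, nseq k, fun n => ?_⟩
  rw [fseq, blocksum_eq_sum (hz_fseq n) ht]
  calc |∑ k ∈ Finset.range K, wfun k t * (nseq k * (2 * gam n (t - (4*k+1)) - 1))|
      ≤ ∑ k ∈ Finset.range K, |wfun k t * (nseq k * (2 * gam n (t - (4*k+1)) - 1))| :=
        Finset.abs_sum_le_sum_abs _ _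
    _ ≤ ∑ k ∈ Finset.range K, nseq k := by
        apply Finset.sum_le_sum
        intro k _
        rw [abs_mul, abs_mul]
        calc |wfun k t| * (|nseq k| * |2 * gam n (t - (4*k+1)) - 1|)
            ≤ 1 * (nseq k * 1) := by
              apply mul_le_mul ?_ ?_ (by positivity) zero_le_one
              · rw [abs_of_nonneg (wfun_nonneg k t)]; exact wfun_le_one k t
              · apply mul_le_mul ?_ (abs_two_gam_sub_one_le _ _) (abs_nonneg _)
                  (nseq_nonneg k)
                rw [abs_of_nonneg (nseq_nonneg k)]
          _ = nseq k := by ring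

lemma block_cover {k : ℕ} {q : ℚ} {n : ℕ} (hdec : dec k = (q, n)) (hn : 1 ≤ n)
    {y : ℕ → ℝ} (hy : ∀ i, |y i| ≤ n) :
    ∃ t : ℝ, 4*(k:ℝ)+1 ≤ t ∧ t ≤ 4*(k:ℝ)+2 ∧ rho t = q ∧ ∀ i, fseq i t = y i := by
  have hn0 : (0:ℝ) < n := by exact_mod_cast hn
  have hy' : ∀ i, (y i / n + 1)/2 ∈ Set.Icc (0:ℝ) 1 := by
    intro i
    have := abs_le.1 (hy i)
    have hd1 : -1 ≤ y i / n := by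
      rw [le_div_iff₀ hn0]; linarith
    have hd2 : y i / n ≤ 1 := by
      rw [div_le_iff₀ hn0]; linarith
    constructor <;> linarith
  obtain ⟨s, hs, hgam⟩ := gam_cover hy'
  refine ⟨4*(k:ℝ)+1+s, by linarith [hs.1], by linarith [hs.2], ?_, ?_⟩
  · rw [rho_block (k := k) (by linarith [hs.1]) (by linarith [hs.2]), qseq, hdec]
  · intro i
    rw [fseq_block (k := k) (by linarith [hs.1]) (by linarith [hs.2])]
    have : 4*(k:ℝ)+1+s - (4*k+1) = s := by ring
    rw [this, hgam i, nseq, hdec]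
    field_simp
    ring


section main
variable (m : ℕ) (hm : 1 ≤ m)

noncomputable def Fmap (c : ℝ) : C(EuclideanSpace ℝ (Fin m), boundedSeq) where
  toFun := fun x =>
    ⟨fun n => Real.exp (c * rho (x ⟨0, hm⟩)) * fseq n (x ⟨0, hm⟩), by
      obtain ⟨C, hC⟩ := fseq_bound (x ⟨0, hm⟩)
      refine ⟨Real.exp (c * rho (x ⟨0, hm⟩)) * C, fun n => ?_⟩
      rw [abs_mul, abs_of_nonneg (Real.exp_pos _).le]
      exact mul_le_mul_of_nonneg_left (hC n) (Real.exp_pos _).le⟩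
  continuous_toFun := by
    apply Continuous.subtype_mk
    apply continuous_pi
    intro n
    have hproj : Continuous (fun x : EuclideanSpace ℝ (Fin m) => x ⟨0, hm⟩) :=
      (EuclideanSpace.proj (⟨0, hm⟩ : Fin m)).continuous
    exact (Real.continuous_exp.comp (continuous_const.mul
      (rho_continuous.comp hproj))).mul ((fseq_continuous n).comp hproj)

noncomputable def hfun (c : ℝ →₀ ℝ) (r : ℝ) : ℝ :=
  ∑ i ∈ c.support, c i * Real.exp (i * r)

lemma comb_coord (c : ℝ →₀ ℝ) (x : EuclideanSpace ℝ (Fin m)) (n : ℕ) :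
    ((Finsupp.linearCombination ℝ (Fmap m hm) c x : boundedSeq) : ℕ → ℝ) n
      = hfun c (rho (x ⟨0, hm⟩)) * fseq n (x ⟨0, hm⟩) := by
  rw [Finsupp.linearCombination_apply, Finsupp.sum, hfun, Finset.sum_mul]
  simp only [ContinuousMap.coe_sum, Finset.sum_apply, ContinuousMap.coe_smul, Pi.smul_apply]
  rw [AddSubmonoidClass.coe_finset_sum]
  rw [Finset.sum_apply]
  apply Finset.sum_congr rfl
  intro i _
  rw [Submodule.coe_smul]
  simp only [Pi.smul_apply, smul_eq_mul, Fmap, ContinuousMap.coe_mk]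
  ring

lemma hfun_ne (c : ℝ →₀ ℝ) (hc : c ≠ 0) : ∃ q : ℚ, hfun c (q : ℝ) ≠ 0 := by
  -- first: hfun c is not identically zero
  have hexp : LinearIndependent ℝ (fun s : ℝ => (fun r : ℝ => Real.exp (s * r))) := by
    have hmh := linearIndependent_monoidHom (Multiplicative ℝ) ℝ
    set E' : ℝ → (Multiplicative ℝ →* ℝ) := fun s =>
      { toFun := fun r => Real.exp (s * (Multiplicative.toAdd r))
        map_one' := by simp
        map_mul' := by
          intro a b
          simp [mul_add, Real.exp_add] } with hE'
    have hinj : Function.Injective E' := by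
      intro a b hab
      have := congrArg (fun f => (f : Multiplicative ℝ →* ℝ) (Multiplicative.ofAdd 1)) hab
      simp only [hE', MonoidHom.coe_mk, OneHom.coe_mk, toAdd_ofAdd, mul_one] at this
      exact Real.exp_injective this
    exact hmh.comp E' hinj
  by_contra hq
  push_neg at hq
  have hzero : ∀ r : ℝ, hfun c r = 0 := by
    have hcont : Continuous (hfun c) := by
      apply continuous_finset_sum
      intro i _
      exact continuous_const.mul (Real.continuous_exp.comp (continuous_const.mul continuous_id))
    by_contra hr
    push_neg at hr
    obtain ⟨r, hr⟩ := hr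
    have hopen : IsOpen {r : ℝ | hfun c r ≠ 0} := isOpen_ne_fun hcont continuous_const
    obtain ⟨q, hq2⟩ := (Rat.denseRange_cast (𝕜 := ℝ)).exists_mem_open hopen ⟨r, hr⟩
    exact hq2 (hq q)
  -- conclude c = 0
  apply hc
  have := linearIndependent_iff'.1 hexp c.support c ?_
  · ext i
    by_cases hi : i ∈ c.support
    · exact this i hi
    · simpa using Finsupp.notMem_support_iff.1 hi
  · funext r
    have := hzero r
    rw [hfun] at this
    simpa [Finset.sum_apply] using this
end main

section main2
variable (m : ℕ) (hm : 1 ≤ m)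

lemma key (c : ℝ →₀ ℝ) (hc : c ≠ 0) (a : boundedSeq) (R : ℝ) :
    ∃ x : EuclideanSpace ℝ (Fin m), R ≤ ‖x‖ ∧
      Finsupp.linearCombination ℝ (Fmap m hm) c x = a := by
  obtain ⟨q, hq⟩ := hfun_ne c hc
  obtain ⟨Ca, hCa⟩ := a.2
  have habs : 0 < |hfun c (q:ℝ)| := abs_pos.2 hq
  obtain ⟨n, hn⟩ := exists_nat_ge (max 1 (Ca / |hfun c (q:ℝ)|))
  have hn1 : 1 ≤ n := by
    have := le_trans (le_max_left 1 (Ca / |hfun c (q:ℝ)|)) hn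
    exact_mod_cast this
  have hnC : Ca ≤ n * |hfun c (q:ℝ)| := by
    have := le_trans (le_max_right 1 (Ca / |hfun c (q:ℝ)|)) hn
    rw [div_le_iff₀ habs] at this
    linarith
  obtain ⟨K, hK⟩ := exists_nat_ge R
  obtain ⟨k, hkK, hdec⟩ := dec_infinite (q, n) K
  set y : ℕ → ℝ := fun i => (a : ℕ → ℝ) i / hfun c (q:ℝ) with hy
  have hyb : ∀ i, |y i| ≤ n := by
    intro i
    rw [hy]
    simp only
    rw [abs_div]
    rw [div_le_iff₀ habs]
    calc |(a : ℕ → ℝ) i| ≤ Ca := hCa i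
      _ ≤ n * |hfun c (q:ℝ)| := hnC
  obtain ⟨t, ht1, ht2, hrho, hfseq⟩ := block_cover hdec hn1 hyb
  set x : EuclideanSpace ℝ (Fin m) := EuclideanSpace.single ⟨0, hm⟩ t with hx
  have hx0 : x ⟨0, hm⟩ = t := by
    rw [hx, EuclideanSpace.single_apply, if_pos rfl]
  refine ⟨x, ?_, ?_⟩
  · rw [hx, EuclideanSpace.norm_single]
    have hkr : (K:ℝ) ≤ k := by exact_mod_cast hkK
    have ht0 : (0:ℝ) ≤ t := by
      have : (0:ℝ) ≤ (k:ℝ) := Nat.cast_nonneg k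
      linarith
    rw [Real.norm_eq_abs, abs_of_nonneg ht0]
    linarith
  · apply Subtype.ext
    funext i
    rw [comb_coord m hm c x i, hx0, hrho, hfseq i, hy]
    field_simp

include hm in
theorem part2 : ∃ (ι : Type) (F : ι → C(EuclideanSpace ℝ (Fin m), boundedSeq)),
    Cardinal.mk ι = Cardinal.continuum ∧
    LinearIndependent ℝ F ∧
    ∀ g ∈ Submodule.span ℝ (Set.range F), g ≠ 0 →
      (Continuous ⇑g ∧ ∀ a : boundedSeq, ¬ Bornology.IsBounded (⇑g ⁻¹' {a})) := by
  refine ⟨ℝ, Fmap m hm, Cardinal.mk_real, ?_, ?_⟩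
  · rw [linearIndependent_iff]
    intro c hcomb
    by_contra hc
    obtain ⟨x, -, hxval⟩ := key m hm c hc ⟨(fun _ => 1), ⟨1, by simp⟩⟩ 0
    rw [hcomb] at hxval
    have := congrArg (fun v : boundedSeq => (v : ℕ → ℝ) 0) hxval
    simp at this
  · intro g hg hg0
    obtain ⟨c, hcg⟩ := Finsupp.mem_span_range_iff_exists_finsupp.1 hg
    have hcg' : Finsupp.linearCombination ℝ (Fmap m hm) c = g := by
      rw [Finsupp.linearCombination_apply]; exact hcg
    have hc : c ≠ 0 := by
      rintro rfl
      rw [← hcg'] at hg0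
      simp at hg0
    refine ⟨g.continuous, fun a hb => ?_⟩
    rw [Metric.isBounded_iff_subset_closedBall 0] at hb
    obtain ⟨r, hr⟩ := hb
    obtain ⟨x, hxn, hxval⟩ := key m hm c hc a (r + 1)
    rw [hcg'] at hxval
    have hxmem : x ∈ ⇑g ⁻¹' {a} := by simp [hxval]
    have := hr hxmem
    rw [Metric.mem_closedBall, dist_zero_right] at this
    linarith
end main2


namespace part1work

def Kset (n : ℕ) : Set boundedSeq := {x | ∀ i, |(x : ℕ → ℝ) i| ≤ n}

def Shat (n : ℕ) : Set (ℕ → ℝ) := {z | ∀ i, |z i| ≤ n}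

noncomputable def ee (n : ℕ) : ↥(Kset n) → (ℕ → ℝ) := fun x => ((x : boundedSeq) : ℕ → ℝ)

lemma ee_embedding (n : ℕ) : Topology.IsEmbedding (ee n) :=
  Topology.IsEmbedding.subtypeVal.comp Topology.IsEmbedding.subtypeVal

lemma ee_inducing (n : ℕ) : Topology.IsInducing (ee n) := (ee_embedding n).isInducing

lemma ee_range (n : ℕ) : Set.range (ee n) = Shat n := by
  ext z
  constructor
  · rintro ⟨⟨x, hx⟩, rfl⟩
    exact hx
  · intro hz
    exact ⟨⟨⟨z, ⟨n, hz⟩⟩, hz⟩, rfl⟩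

lemma ee_image_preimage (n : ℕ) (S : Set (ℕ → ℝ)) :
    ee n '' (ee n ⁻¹' S) = S ∩ Shat n := by
  rw [Set.image_preimage_eq_inter_range, ee_range]

lemma shat_convex (n : ℕ) : Convex ℝ (Shat n) := by
  have : Shat n = Set.pi Set.univ (fun _ : ℕ => Set.Icc (-(n:ℝ)) n) := by
    ext z
    simp [Shat, abs_le, Set.mem_pi, Pi.le_def, forall_and]
  rw [this]
  exact convex_pi (fun i _ => convex_Icc _ _)

lemma shat_compact (n : ℕ) : IsCompact (Shat n) := by
  have : Shat n = Set.pi Set.univ (fun _ : ℕ => Set.Icc (-(n:ℝ)) n) := by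
    ext z
    simp [Shat, abs_le, Set.mem_pi, Pi.le_def, forall_and]
  rw [this]
  exact isCompact_univ_pi (fun _ => isCompact_Icc)

lemma kset_nonempty (n : ℕ) : Nonempty ↥(Kset n) :=
  ⟨⟨0, fun i => by simp⟩⟩

lemma ee_image_univ (n : ℕ) : ee n '' Set.univ = Shat n := by
  rw [Set.image_univ, ee_range]

lemma kset_compactSpace (n : ℕ) : CompactSpace ↥(Kset n) := by
  rw [← isCompact_univ_iff, (ee_inducing n).isCompact_iff, ee_image_univ]
  exact shat_compact n

lemma kset_connectedSpace (n : ℕ) : ConnectedSpace ↥(Kset n) := by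
  have h1 : IsPreconnected (Set.univ : Set ↥(Kset n)) := by
    rw [← (ee_inducing n).isPreconnected_image, ee_image_univ]
    exact (shat_convex n).isPreconnected
  have := kset_nonempty n
  exact { isPreconnected_univ := h1, toNonempty := this }

lemma kset_locallyConnected (n : ℕ) : LocallyConnectedSpace ↥(Kset n) := by
  rw [locallyConnectedSpace_iff_connected_subsets]
  intro x U hU
  rw [(ee_inducing n).nhds_eq_comap, Filter.mem_comap] at hU
  obtain ⟨W, hW, hWU⟩ := hU
  rw [nhds_pi, Filter.mem_pi] at hW
  obtain ⟨I, hIfin, tt, htt, htW⟩ := hW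
  have hIoo : ∀ i : ℕ, ∃ l u : ℝ, ee n x i ∈ Set.Ioo l u ∧ (i ∈ I → Set.Ioo l u ⊆ tt i) := by
    intro i
    by_cases hi : i ∈ I
    · obtain ⟨l, u, hmem, hsub⟩ := mem_nhds_iff_exists_Ioo_subset.1 (htt i)
      exact ⟨l, u, hmem, fun _ => hsub⟩
    · exact ⟨ee n x i - 1, ee n x i + 1, by simp, fun h => absurd h hi⟩
  choose l u hmem hsub using hIoo
  set P : Set (ℕ → ℝ) := I.pi (fun i => Set.Ioo (l i) (u i)) with hP
  refine ⟨ee n ⁻¹' P, ?_, ?_, ?_⟩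
  · rw [(ee_inducing n).nhds_eq_comap, Filter.mem_comap]
    refine ⟨P, ?_, subset_rfl⟩
    exact set_pi_mem_nhds hIfin (fun i _ => (isOpen_Ioo.mem_nhds (hmem i)))
  · rw [← (ee_inducing n).isPreconnected_image, ee_image_preimage]
    apply Convex.isPreconnected
    apply Convex.inter ?_ (shat_convex n)
    exact convex_pi (fun i _ => convex_Ioo _ _)
  · intro z hz
    apply hWU
    apply htW
    intro i hi
    exact hsub i hi (hz i hi)

set_option synthInstance.maxHeartbeats 1000000 in
lemma kset_peano (n : ℕ) : IsPeanoSpace ↥(Kset n) :=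
  ⟨kset_nonempty n, kset_compactSpace n, kset_connectedSpace n,
    kset_locallyConnected n, (ee_embedding n).metrizableSpace⟩

theorem part1 : IsSigmaPeano boundedSeq := by
  refine ⟨Kset, ?_, kset_peano, ?_⟩
  · intro a b hab x hx i
    calc |(x : ℕ → ℝ) i| ≤ a := hx i
      _ ≤ b := by exact_mod_cast hab
  · rw [Set.eq_univ_iff_forall]
    intro x
    obtain ⟨C, hC⟩ := x.2
    obtain ⟨n, hn⟩ := exists_nat_ge C
    exact Set.mem_iUnion.2 ⟨n, fun i => (hC i).trans hn⟩

end part1work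


theorem stmt17 (m : ℕ) (hm : 1 ≤ m) :
    IsSigmaPeano boundedSeq ∧
      ∃ (ι : Type) (F : ι → C(EuclideanSpace ℝ (Fin m), boundedSeq)),
        Cardinal.mk ι = Cardinal.continuum ∧
        LinearIndependent ℝ F ∧
        ∀ g ∈ Submodule.span ℝ (Set.range F), g ≠ 0 → CSInf m boundedSeq ⇑g := by
  constructor
  · exact part1work.part1
  · obtain ⟨ι, F, h1, h2, h3⟩ := part2 m hm
    exact ⟨ι, F, h1, h2, fun g hg h0 => h3 g hg h0⟩
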